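/- Let G be a hereditary graph class with sep(G(n)) ≤ c·n^(1−ε) for some c > 0 and ε ∈ (0,1). Then every n-vertex graph G ∈ G has a set S such that both S and every connected component of G − S have at most max{c·2^ε/(2^ε − 1), 1}·n^(1/(1+ε)) vertices; consequently spw(G) ≤ max{c·2^ε/(2^ε − 1), 1}·n^(1/(1+ε)). -/

import Mathlib

open SimpleGraph

/-- The strong product of two simple graphs. -/
def StrongProd {V W : Type*} (G : SimpleGraph V) (H : SimpleGraph W) : SimpleGraph (V × W) where
  Adj a b := a ≠ b ∧ (a.1 = b.1 ∨ G.Adj a.1 b.1) ∧ (a.2 = b.2 ∨ H.Adj a.2 b.2)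
  symm := by
    constructor; rintro a b ⟨hne, h1, h2⟩
    exact ⟨hne.symm, h1.imp Eq.symm (fun h => h.symm), h2.imp Eq.symm (fun h => h.symm)⟩
  loopless := by constructor; rintro a ⟨hne, _⟩; exact hne rfl

/-- `G` is isomorphic to a subgraph of `H`. -/
def ContainedIn {V W : Type*} (G : SimpleGraph V) (H : SimpleGraph W) : Prop :=
  ∃ f : V → W, Function.Injective f ∧ ∀ ⦃u v⦄, G.Adj u v → H.Adj (f u) (f v)

/-- Every connected component of `G - S` has at most `q` vertices. -/
def CompsLE {V : Type*} (G : SimpleGraph V) (S : Set V) (q : ℕ) : Prop :=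
  ∀ c : (G.induce Sᶜ).ConnectedComponent, Nat.card c.supp ≤ q

/-- Every connected component of `G - S` has at most `q` vertices (real bound). -/
def CompsLER {V : Type*} (G : SimpleGraph V) (S : Set V) (q : ℝ) : Prop :=
  ∀ c : (G.induce Sᶜ).ConnectedComponent, (Nat.card c.supp : ℝ) ≤ q

/-- `(TG, B)` is a tree-decomposition of `G`: `TG` is a tree, every vertex and
every edge of `G` lies in some bag, and for each vertex the set of nodes whose
bag contains it induces a nonempty connected subgraph of `TG`. -/
def IsTreeDecomp {V T : Type*} (G : SimpleGraph V) (TG : SimpleGraph T) (B : T → Set V) : Prop :=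
  TG.IsTree ∧
  (∀ v, ∃ t, v ∈ B t) ∧
  (∀ ⦃u v⦄, G.Adj u v → ∃ t, u ∈ B t ∧ v ∈ B t) ∧
  (∀ v, (TG.induce {t | v ∈ B t}).Connected)

/-- The tree-width of `G` is at most `k`. -/
def twLE {V : Type*} (G : SimpleGraph V) (k : ℕ) : Prop :=
  ∃ (T : Type) (TG : SimpleGraph T) (B : T → Set V),
    IsTreeDecomp G TG B ∧ ∀ t, Nat.card (B t) ≤ k + 1

/-- A path-decomposition of `G` with `t` bags. -/
def IsPathDecomp {V : Type*} (G : SimpleGraph V) (t : ℕ) (B : Fin t → Set V) : Prop :=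
  (∀ v, ∃ i, v ∈ B i) ∧
  (∀ ⦃u v⦄, G.Adj u v → ∃ i, u ∈ B i ∧ v ∈ B i) ∧
  (∀ i j l : Fin t, i ≤ j → j ≤ l → B i ∩ B l ⊆ B j)

/-- The path-width of `G` is at most `k`. -/
def pwLE {V : Type*} (G : SimpleGraph V) (k : ℕ) : Prop :=
  ∃ (t : ℕ) (B : Fin t → Set V), IsPathDecomp G t B ∧ ∀ i, Nat.card (B i) ≤ k + 1

/-- The tree-depth of `G` is at most `d`: there is a strict forest order (the
strict ancestor relation of a rooted forest) whose comparability graph contains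
`G`, with all chains of at most `d` vertices. -/
def tdLE {V : Type*} (G : SimpleGraph V) (d : ℕ) : Prop :=
  ∃ lt : V → V → Prop,
    Transitive lt ∧
    (∀ u v w, lt u w → lt v w → lt u v ∨ lt v u ∨ u = v) ∧
    (∀ ⦃u v⦄, G.Adj u v → lt u v ∨ lt v u) ∧
    ∃ f : V → Fin d, ∀ u v, lt u v → f u < f v

/-- `P` is an `H`-partition of `G`: the parts partition `V(G)` and every edge of
`G` lies within a part or between parts indexed by adjacent vertices of `H`. -/
def IsHPartition {V W : Type*} (G : SimpleGraph V) (H : SimpleGraph W) (P : W → Set V) : Prop :=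
  (∀ v, ∃! x, v ∈ P x) ∧
  ∀ ⦃u v⦄, G.Adj u v → ∀ ⦃x y⦄, u ∈ P x → v ∈ P y → x = y ∨ H.Adj x y

/-- The tree-partition-width of `G` is at most `m`. -/
def tpwLE {V : Type*} (G : SimpleGraph V) (m : ℕ) : Prop :=
  ∃ (T : Type) (TG : SimpleGraph T) (P : T → Set V),
    TG.IsTree ∧ IsHPartition G TG P ∧ ∀ x, Nat.card (P x) ≤ m

/-- The star with centre `none` and leaves `some i`, `i : ι`. -/
def starGraph (ι : Type*) : SimpleGraph (Option ι) where
  Adj a b := a ≠ b ∧ (a = none ∨ b = none)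
  symm := by constructor; rintro a b ⟨hne, h⟩; exact ⟨hne.symm, h.symm⟩
  loopless := by constructor; rintro a ⟨hne, _⟩; exact hne rfl

/-- A graph class is hereditary if it is closed under induced subgraphs. -/
def Hereditary (𝒢 : ∀ V : Type, SimpleGraph V → Prop) : Prop :=
  ∀ (V : Type) (G : SimpleGraph V), 𝒢 V G → ∀ S : Set V, 𝒢 S (G.induce S)

/-- Every `n`-vertex graph of the class has a balanced separator of size at most
`c * n ^ (1 - ε)`. -/
def SepBound (𝒢 : ∀ V : Type, SimpleGraph V → Prop) (c ε : ℝ) : Prop :=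
  ∀ (V : Type) [Fintype V] (G : SimpleGraph V), 𝒢 V G →
    ∃ S : Finset V, (S.card : ℝ) ≤ c * (Fintype.card V : ℝ) ^ (1 - ε) ∧
      CompsLER G ↑S ((Fintype.card V : ℝ) / 2)

/-- The `k`-th power of the `n`-vertex path. -/
def pathPow (n k : ℕ) : SimpleGraph (Fin n) where
  Adj i j := i ≠ j ∧ (i.val : ℤ) - j.val ≤ k ∧ (j.val : ℤ) - i.val ≤ k
  symm := by constructor; rintro i j ⟨hne, h1, h2⟩; exact ⟨hne.symm, h2, h1⟩
  loopless := by constructor; rintro i ⟨hne, _⟩; exact hne rfl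

lemma glue_lemma {W : Type} [Finite W] (H : SimpleGraph W) (S0 : Set W) (q : ℝ)
    (SK : ∀ K : (H.induce S0ᶜ).ConnectedComponent, Set ↥(K.supp))
    (T : Set W) (hS0T : S0 ⊆ T)
    (hSKT : ∀ (K : (H.induce S0ᶜ).ConnectedComponent) (x : ↥(K.supp)), x ∈ SK K → (x.val.val ∈ T))
    (hrec : ∀ K, CompsLER ((H.induce S0ᶜ).induce K.supp) (SK K) q) :
    CompsLER H T q := by
  intro D
  obtain ⟨v₀, hv₀⟩ := D.exists_rep
  have hv0T : (v₀ : W) ∉ T := v₀.2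
  have hv0S0 : (v₀ : W) ∈ S0ᶜ := fun h => hv0T (hS0T h)
  set K := (H.induce S0ᶜ).connectedComponentMk ⟨(v₀ : W), hv0S0⟩ with hK
  have hx₀K : (⟨(v₀ : W), hv0S0⟩ : ↥(S0ᶜ)) ∈ K.supp := rfl
  set x₀ : ↥(K.supp) := ⟨⟨(v₀ : W), hv0S0⟩, hx₀K⟩ with hx₀
  have hx₀SK : x₀ ∈ (SK K)ᶜ := fun h => hv0T (hSKT K x₀ h)
  set z₀ : ↥((SK K)ᶜ) := ⟨x₀, hx₀SK⟩ with hz₀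
  set E := (((H.induce S0ᶜ).induce K.supp).induce ((SK K)ᶜ)).connectedComponentMk z₀ with hE
  set vmap : ↥((SK K)ᶜ) → W := fun z => ((((z : ↥(K.supp)) : ↥(S0ᶜ)) : W)) with hvmap
  -- one step
  have step : ∀ u w : ↥(Tᶜ), (H.induce Tᶜ).Adj u w →
      (u : W) ∈ vmap '' E.supp → (w : W) ∈ vmap '' E.supp := by
    intro u w hadj' ⟨z, hzE, hz⟩
    have hadj : H.Adj (u : W) (w : W) := hadj'
    have hwT : (w : W) ∉ T := w.2
    have hwS0 : (w : W) ∈ S0ᶜ := fun h => hwT (hS0T h)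
    have huval : (((z : ↥(K.supp)) : ↥(S0ᶜ)) : W) = (u : W) := hz
    have hadj2 : (H.induce S0ᶜ).Adj ((z : ↥(K.supp)) : ↥(S0ᶜ)) ⟨(w : W), hwS0⟩ := by
      simp only [comap_adj, Function.Embedding.coe_subtype, huval]
      exact hadj
    have hw'K : (⟨(w : W), hwS0⟩ : ↥(S0ᶜ)) ∈ K.supp := by
      rw [ConnectedComponent.mem_supp_iff]
      rw [← ConnectedComponent.connectedComponentMk_eq_of_adj hadj2]
      exact (z : ↥(K.supp)).2
    have hw''SK : (⟨⟨(w : W), hwS0⟩, hw'K⟩ : ↥(K.supp)) ∈ (SK K)ᶜ :=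
      fun h => hwT (hSKT K _ h)
    refine ⟨⟨⟨⟨(w : W), hwS0⟩, hw'K⟩, hw''SK⟩, ?_, rfl⟩
    rw [ConnectedComponent.mem_supp_iff]
    have hadj3 : (((H.induce S0ᶜ).induce K.supp).induce ((SK K)ᶜ)).Adj z
        ⟨⟨⟨(w : W), hwS0⟩, hw'K⟩, hw''SK⟩ := by
      simp only [comap_adj, Function.Embedding.coe_subtype]
      exact hadj2
    rw [← ConnectedComponent.connectedComponentMk_eq_of_adj hadj3]
    exact (ConnectedComponent.mem_supp_iff _ _).mp hzE
  have key : ∀ (u w : ↥(Tᶜ)) (p : (H.induce Tᶜ).Walk u w),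
      (u : W) ∈ vmap '' E.supp → (w : W) ∈ vmap '' E.supp := by
    intro u w p
    induction p with
    | nil => exact id
    | cons h p ih => exact fun hu => ih (step _ _ h hu)
  have hbase : ((v₀ : W)) ∈ vmap '' E.supp := ⟨z₀, rfl, rfl⟩
  have hmem : ∀ d : ↥(D.supp), ∃ z : ↥(E.supp), vmap z = ((d : ↥(Tᶜ)) : W) := by
    rintro ⟨d, hd⟩
    rw [ConnectedComponent.mem_supp_iff] at hd
    have hreach : (H.induce Tᶜ).Reachable v₀ d := by
      rw [← ConnectedComponent.eq]
      exact hv₀.trans hd.symm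
    obtain ⟨p⟩ := hreach
    obtain ⟨z, hzE, hz⟩ := key v₀ d p hbase
    exact ⟨⟨z, hzE⟩, hz⟩
  choose g hg using hmem
  have hinj : Function.Injective g := by
    intro a b hab
    have : ((a : ↥(Tᶜ)) : W) = ((b : ↥(Tᶜ)) : W) := by rw [← hg a, ← hg b, hab]
    exact Subtype.ext (Subtype.ext this)
  calc ((Nat.card D.supp : ℝ)) ≤ (Nat.card E.supp : ℝ) := by
        exact_mod_cast Nat.card_le_card_of_injective g hinj
    _ ≤ q := hrec K E

lemma sum_card_supp {α : Type} [Fintype α] (G : SimpleGraph α) [Fintype G.ConnectedComponent] :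
    ∑ K : G.ConnectedComponent, Nat.card K.supp = Fintype.card α := by
  classical
  rw [← Fintype.card_congr (Equiv.sigmaFiberEquiv G.connectedComponentMk), Fintype.card_sigma]
  refine Finset.sum_congr rfl fun K _ => ?_
  rw [Nat.card_eq_fintype_card]
  exact Fintype.card_congr (Equiv.subtypeEquivRight fun x => Iff.rfl)

lemma card_supp_le_nat {W : Type} [Finite W] (H : SimpleGraph W) (s : Set W)
    (c : (H.induce sᶜ).ConnectedComponent) : Nat.card c.supp ≤ Nat.card W :=
  Nat.card_le_card_of_injective (fun x : c.supp => (x.val.val : W))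
    (fun a b h => Subtype.ext (Subtype.ext h))

lemma small_case {W : Type} [Fintype W] (H : SimpleGraph W) {q : ℝ}
    (hcard : (Fintype.card W : ℝ) ≤ q) : CompsLER H (↑(∅ : Finset W)) q := by
  intro K
  have h := card_supp_le_nat H (↑(∅ : Finset W)) K
  calc (Nat.card K.supp : ℝ) ≤ (Nat.card W : ℝ) := by exact_mod_cast h
    _ = (Fintype.card W : ℝ) := by rw [Nat.card_eq_fintype_card]
    _ ≤ q := hcard

lemma perK {C c' ε q mR : ℝ} (x : ℝ) (hc' : 0 < c') (hC2 : C = c' * 2 ^ ε)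
    (hε0 : 0 < ε) (hε1 : ε < 1) (hq : 1 ≤ q) (hqm : q ≤ mR)
    (hx0 : 0 ≤ x) (hx : x ≤ mR / 2) :
    max 0 (C * x / q ^ ε - c' * x ^ (1 - ε)) ≤ x * (C / q ^ ε - c' * 2 ^ ε / mR ^ ε) := by
  have hq0 : (0:ℝ) < q := lt_of_lt_of_le one_pos hq
  have hm0 : (0:ℝ) < mR := lt_of_lt_of_le hq0 hqm
  have hqε : (0:ℝ) < q ^ ε := Real.rpow_pos_of_pos hq0 ε
  have hmε : (0:ℝ) < mR ^ ε := Real.rpow_pos_of_pos hm0 ε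
  have hβ : (0:ℝ) ≤ C / q ^ ε - c' * 2 ^ ε / mR ^ ε := by
    rw [hC2, sub_nonneg]
    gcongr <;> first
      | positivity
      | exact Real.rpow_le_rpow hq0.le hqm hε0.le
  apply max_le (mul_nonneg hx0 hβ)
  rcases eq_or_lt_of_le hx0 with h0 | hxpos
  · have hne : (1:ℝ) - ε ≠ 0 := by linarith
    rw [← h0]
    simp [Real.zero_rpow hne]
  · have h1 : x ^ (1 - ε) * x ^ ε = x := by
      rw [← Real.rpow_add hxpos, sub_add_cancel, Real.rpow_one]
    have h2 : (2:ℝ) ^ ε * x ^ ε ≤ mR ^ ε := by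
      rw [← Real.mul_rpow (by norm_num) hx0]
      exact Real.rpow_le_rpow (by linarith) (by linarith) hε0.le
    have h3 := mul_le_mul_of_nonneg_left h2 (Real.rpow_nonneg hx0 (1 - ε))
    have h4 : x ^ (1 - ε) * ((2:ℝ) ^ ε * x ^ ε) = 2 ^ ε * x := by
      rw [← mul_assoc, mul_comm (x ^ (1 - ε)) ((2:ℝ) ^ ε), mul_assoc, h1]
    have h6 : (2:ℝ) ^ ε * x ≤ x ^ (1 - ε) * mR ^ ε := h4 ▸ h3
    have h7 : (2:ℝ) ^ ε * x / mR ^ ε ≤ x ^ (1 - ε) := (div_le_iff₀ hmε).mpr h6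
    have h8 : c' * ((2:ℝ) ^ ε * x / mR ^ ε) ≤ c' * x ^ (1 - ε) :=
      mul_le_mul_of_nonneg_left h7 hc'.le
    have hring : x * (C / q ^ ε - c' * 2 ^ ε / mR ^ ε)
        = C * x / q ^ ε - c' * ((2:ℝ) ^ ε * x / mR ^ ε) := by ring
    linarith

lemma rec_main (𝒢 : ∀ V : Type, SimpleGraph V → Prop) (hher : Hereditary 𝒢)
    (c ε : ℝ) (hc : 0 < c) (hε0 : 0 < ε) (hε1 : ε < 1) (hsep : SepBound 𝒢 c ε)
    (C c' : ℝ) (hc' : 0 < c') (hCsum : C = c + c') (hC2 : C = c' * 2 ^ ε)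
    (q : ℝ) (hq : 1 ≤ q) :
    ∀ (n : ℕ) (W : Type) [Fintype W] (H : SimpleGraph W), 𝒢 W H → Fintype.card W ≤ n →
      ∃ S : Finset W,
        ((S.card : ℝ) ≤
          max 0 (C * (Fintype.card W : ℝ) / q ^ ε - c' * ((Fintype.card W : ℝ)) ^ (1 - ε))) ∧
        CompsLER H (↑S) q := by
  intro n
  induction n with
  | zero =>
    intro W _ H hG hcard
    refine ⟨∅, by simpa using le_max_left 0 _, small_case H ?_⟩
    have : Fintype.card W = 0 := Nat.le_zero.mp hcard
    rw [this]; exact_mod_cast le_trans zero_le_one hq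
  | succ n IH =>
    intro W _ H hG hcard
    classical
    by_cases hsmall : (Fintype.card W : ℝ) ≤ q
    · exact ⟨∅, by simpa using le_max_left 0 _, small_case H hsmall⟩
    push_neg at hsmall
    set mR : ℝ := (Fintype.card W : ℝ) with hmR
    have hq0 : (0:ℝ) < q := lt_of_lt_of_le one_pos hq
    have hm0 : (0:ℝ) < mR := lt_trans hq0 hsmall
    have hm2 : (2:ℝ) ≤ mR := by
      have h1 : (1:ℝ) < mR := lt_of_le_of_lt hq hsmall
      have h2 : 1 < Fintype.card W := by rw [hmR] at h1; exact_mod_cast h1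
      have h3 : 2 ≤ Fintype.card W := h2
      rw [hmR]; exact_mod_cast h3
    -- separator
    obtain ⟨S0, hS0card, hS0comp⟩ := hsep W H hG
    -- components
    set G1 := H.induce (↑S0 : Set W)ᶜ with hG1
    haveI : Fintype G1.ConnectedComponent := Fintype.ofFinite _
    have hG1mem : 𝒢 _ G1 := hher W H hG _
    -- recurse on each component
    have hcomp : ∀ K : G1.ConnectedComponent,
        ∃ S : Finset ↥(K.supp),
          ((S.card : ℝ) ≤
            max 0 (C * (Nat.card K.supp : ℝ) / q ^ ε - c' * ((Nat.card K.supp : ℝ)) ^ (1 - ε))) ∧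
          CompsLER (G1.induce K.supp) (↑S) q := by
      intro K
      haveI : Fintype ↥(K.supp) := Fintype.ofFinite _
      have hKcard : (Nat.card K.supp : ℝ) ≤ mR / 2 := by
        rw [hmR]; exact hS0comp K
      have hKn : Fintype.card ↥(K.supp) ≤ n := by
        rw [← Nat.card_eq_fintype_card]
        have hn1 : (1:ℕ) ≤ n := by
          by_contra h
          push_neg at h
          have hn0 : n = 0 := by omega
          have h2 : Fintype.card W ≤ 1 := by omega
          have h3 : mR ≤ 1 := by rw [hmR]; exact_mod_cast h2
          linarith
        have hmn : mR ≤ (n : ℝ) + 1 := by rw [hmR]; exact_mod_cast hcard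
        have hn1' : (1:ℝ) ≤ (n:ℝ) := by exact_mod_cast hn1
        have h1 : (Nat.card K.supp : ℝ) ≤ (n : ℝ) := by linarith
        exact_mod_cast h1
      have := IH ↥(K.supp) (G1.induce K.supp) (hher _ _ hG1mem _) hKn
      rwa [← Nat.card_eq_fintype_card] at this
    choose SKf hSK1 hSK2 using hcomp
    -- total separator
    set T : Finset W :=
      S0 ∪ Finset.univ.biUnion (fun K => (SKf K).image (fun x => x.val.val)) with hT
    refine ⟨T, ?_, ?_⟩
    · -- cardinality bound
      have hTcard : (T.card : ℝ) ≤ (S0.card : ℝ) + ∑ K, ((SKf K).card : ℝ) := by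
        have h1 : T.card ≤ S0.card + ∑ K, (SKf K).card := by
          refine le_trans (Finset.card_union_le _ _) ?_
          gcongr
          refine le_trans (Finset.card_biUnion_le) ?_
          exact Finset.sum_le_sum fun K _ => Finset.card_image_le
        calc (T.card : ℝ) ≤ ((S0.card + ∑ K, (SKf K).card : ℕ) : ℝ) := by exact_mod_cast h1
          _ = (S0.card : ℝ) + ∑ K, ((SKf K).card : ℝ) := by push_cast; try ring
      set β : ℝ := C / q ^ ε - c' * 2 ^ ε / mR ^ ε with hβdef
      have hβ : (0:ℝ) ≤ β := by
        rw [hβdef, hC2, sub_nonneg]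
        gcongr <;> first
          | positivity
          | exact Real.rpow_le_rpow hq0.le hsmall.le hε0.le
      have hsum1 : ∑ K, ((SKf K).card : ℝ) ≤ ∑ K : G1.ConnectedComponent, ((Nat.card (ConnectedComponent.supp K) : ℝ) * β) := by
        refine Finset.sum_le_sum fun K _ => ?_
        refine le_trans (hSK1 K) ?_
        exact perK _ hc' hC2 hε0 hε1 hq hsmall.le (Nat.cast_nonneg _) (hS0comp K)
      have hsum2 : ∑ K : G1.ConnectedComponent, ((Nat.card (ConnectedComponent.supp K) : ℝ) * β)
          = (∑ K : G1.ConnectedComponent, (Nat.card (ConnectedComponent.supp K) : ℝ)) * β := by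
        rw [Finset.sum_mul]
      have hsum3 : (∑ K : G1.ConnectedComponent, (Nat.card (ConnectedComponent.supp K) : ℝ)) ≤ mR := by
        have h1 : ∑ K : G1.ConnectedComponent, Nat.card K.supp
            = Fintype.card ↥((↑S0 : Set W)ᶜ) := sum_card_supp G1
        have h2 : Fintype.card ↥((↑S0 : Set W)ᶜ) ≤ Fintype.card W :=
          Fintype.card_le_of_injective Subtype.val Subtype.val_injective
        calc (∑ K : G1.ConnectedComponent, (Nat.card (ConnectedComponent.supp K) : ℝ))
            = ((∑ K : G1.ConnectedComponent, Nat.card K.supp : ℕ) : ℝ) := by push_cast; try ring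
          _ ≤ mR := by rw [h1, hmR]; exact_mod_cast h2
      have hmain : (S0.card : ℝ) + ∑ K, ((SKf K).card : ℝ)
          ≤ c * mR ^ (1 - ε) + β * mR := by
        have := mul_le_mul_of_nonneg_left hsum3 hβ
        calc (S0.card : ℝ) + ∑ K, ((SKf K).card : ℝ)
            ≤ c * mR ^ (1 - ε) + (∑ K : G1.ConnectedComponent, (Nat.card (ConnectedComponent.supp K) : ℝ)) * β := by
              rw [← hsum2]; exact add_le_add hS0card hsum1
          _ ≤ c * mR ^ (1 - ε) + β * mR := by
              rw [add_le_add_iff_left, mul_comm β mR]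
              exact mul_le_mul_of_nonneg_right hsum3 hβ
      have hfinal : c * mR ^ (1 - ε) + β * mR ≤ C * mR / q ^ ε - c' * mR ^ (1 - ε) := by
        have hmε : (0:ℝ) < mR ^ ε := Real.rpow_pos_of_pos hm0 ε
        have e1 : mR ^ (1 - ε) * mR ^ ε = mR := by
          rw [← Real.rpow_add hm0, sub_add_cancel, Real.rpow_one]
        have e2 : mR ^ (1 - ε) = mR / mR ^ ε := (eq_div_iff hmε.ne').mpr e1
        have e3 : c' * 2 ^ ε * (mR / mR ^ ε) = c' * 2 ^ ε * mR ^ (1 - ε) := by rw [← e2]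
        have hC2' : C * mR ^ (1 - ε) = c' * 2 ^ ε * mR ^ (1 - ε) := by rw [hC2]
        have hCsum' : C * mR ^ (1 - ε) = c * mR ^ (1 - ε) + c' * mR ^ (1 - ε) := by
          rw [hCsum]; ring
        have hβm : β * mR = C * mR / q ^ ε - c' * 2 ^ ε * (mR / mR ^ ε) := by
          rw [hβdef]; ring
        linarith
      calc (T.card : ℝ) ≤ (S0.card : ℝ) + ∑ K, ((SKf K).card : ℝ) := hTcard
        _ ≤ C * mR / q ^ ε - c' * mR ^ (1 - ε) := le_trans hmain hfinal
        _ ≤ max 0 (C * mR / q ^ ε - c' * mR ^ (1 - ε)) := le_max_right _ _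
    · -- CompsLER
      refine glue_lemma H (↑S0) q (fun K => ↑(SKf K)) (↑T) ?_ ?_ ?_
      · intro x hx
        have hx' : x ∈ S0 := Finset.mem_coe.mp hx
        have : x ∈ T := by rw [hT]; exact Finset.mem_union_left _ hx'
        exact Finset.mem_coe.mpr this
      · intro K x hx
        have hx' : x ∈ SKf K := hx
        have : x.val.val ∈ T := by
          rw [hT]
          exact Finset.mem_union_right _ (Finset.mem_biUnion.mpr
            ⟨K, Finset.mem_univ _, Finset.mem_image_of_mem _ hx'⟩)
        exact Finset.mem_coe.mpr this
      · exact hSK2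

theorem sublinear_separator_spw
    (𝒢 : ∀ V : Type, SimpleGraph V → Prop) (hher : Hereditary 𝒢)
    (c ε : ℝ) (hc : 0 < c) (hε0 : 0 < ε) (hε1 : ε < 1)
    (hsep : SepBound 𝒢 c ε)
    (V : Type) [Fintype V] (G : SimpleGraph V) (hG : 𝒢 V G) :
    ∃ S : Finset V,
      (S.card : ℝ) ≤
        max (c * 2 ^ ε / (2 ^ ε - 1)) 1 * (Fintype.card V : ℝ) ^ (1 / (1 + ε)) ∧
      CompsLER G (↑S)
        (max (c * 2 ^ ε / (2 ^ ε - 1)) 1 * (Fintype.card V : ℝ) ^ (1 / (1 + ε))) := by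
  classical
  have h2ε : (1:ℝ) < 2 ^ ε := Real.one_lt_rpow_iff_of_pos (by norm_num) |>.mpr
    (Or.inl ⟨by norm_num, hε0⟩)
  have h2ε0 : (0:ℝ) < 2 ^ ε - 1 := by linarith
  have hexp : (1:ℝ) / (1 + ε) ≠ 0 := by positivity
  set M : ℝ := max (c * 2 ^ ε / (2 ^ ε - 1)) 1 with hM
  have hM1 : (1:ℝ) ≤ M := le_max_right _ _
  by_cases hn : Fintype.card V = 0
  · refine ⟨∅, ?_, ?_⟩
    · simp [hn, Real.zero_rpow (show ((1:ℝ)+ε)⁻¹ ≠ 0 by positivity)]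
    · intro K
      have h1 := card_supp_le_nat G (↑(∅ : Finset V)) K
      have h2 : Nat.card V = 0 := by rw [Nat.card_eq_fintype_card, hn]
      have h3 : Nat.card K.supp = 0 := by omega
      rw [h3, hn]
      simp [Real.zero_rpow (show ((1:ℝ)+ε)⁻¹ ≠ 0 by positivity)]
  · have hn1 : 1 ≤ Fintype.card V := Nat.one_le_iff_ne_zero.mpr hn
    have hnR : (1:ℝ) ≤ (Fintype.card V : ℝ) := by exact_mod_cast hn1
    have hrpow1 : (1:ℝ) ≤ ((Fintype.card V : ℝ)) ^ ((1:ℝ)/(1+ε)) :=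
      Real.one_le_rpow hnR (by positivity)
    set q : ℝ := M * ((Fintype.card V : ℝ)) ^ ((1:ℝ)/(1+ε)) with hqdef
    have hq1 : (1:ℝ) ≤ q := by
      rw [hqdef]
      nlinarith
    have hqpos : (0:ℝ) < q := lt_of_lt_of_le one_pos hq1
    set c'' : ℝ := c / (2 ^ ε - 1) with hc''def
    have hc''0 : 0 < c'' := div_pos hc h2ε0
    have hCsum : c * 2 ^ ε / (2 ^ ε - 1) = c + c'' := by
      rw [hc''def]; field_simp; ring
    have hC2 : c * 2 ^ ε / (2 ^ ε - 1) = c'' * 2 ^ ε := by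
      rw [hc''def]; ring
    obtain ⟨S, hScard, hScomp⟩ := rec_main 𝒢 hher c ε hc hε0 hε1 hsep
      (c * 2 ^ ε / (2 ^ ε - 1)) c'' hc''0 hCsum hC2 q hq1 (Fintype.card V) V G hG le_rfl
    refine ⟨S, ?_, hScomp⟩
    refine le_trans hScard (max_le hqpos.le ?_)
    -- C * n / q ^ ε - c'' * n ^ (1-ε) ≤ q
    have hqε : (0:ℝ) < q ^ ε := Real.rpow_pos_of_pos hqpos ε
    have hMpos : (0:ℝ) < M := lt_of_lt_of_le one_pos hM1
    have e1 : q * q ^ ε = q ^ ((1:ℝ) + ε) := by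
      rw [Real.rpow_add hqpos, Real.rpow_one]
    have e2 : q ^ ((1:ℝ) + ε)
        = M ^ ((1:ℝ)+ε) * (((Fintype.card V : ℝ)) ^ ((1:ℝ)/(1+ε))) ^ ((1:ℝ)+ε) := by
      rw [hqdef, Real.mul_rpow hMpos.le (Real.rpow_nonneg (by positivity) _)]
    have e3 : (((Fintype.card V : ℝ)) ^ ((1:ℝ)/(1+ε))) ^ ((1:ℝ)+ε) = (Fintype.card V : ℝ) := by
      rw [← Real.rpow_mul (by positivity), one_div_mul_cancel (by positivity : (1:ℝ)+ε ≠ 0),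
        Real.rpow_one]
    have e4 : c * 2 ^ ε / (2 ^ ε - 1) ≤ M ^ ((1:ℝ)+ε) := by
      have hMε : (1:ℝ) ≤ M ^ ε := Real.one_le_rpow hM1 hε0.le
      have : M ^ ((1:ℝ)+ε) = M * M ^ ε := by
        rw [Real.rpow_add hMpos, Real.rpow_one]
      rw [this]
      calc c * 2 ^ ε / (2 ^ ε - 1) ≤ M := le_max_left _ _
        _ ≤ M * M ^ ε := le_mul_of_one_le_right hMpos.le hMε
    have key : c * 2 ^ ε / (2 ^ ε - 1) * (Fintype.card V : ℝ) / q ^ ε ≤ q := by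
      rw [div_le_iff₀ hqε]
      calc c * 2 ^ ε / (2 ^ ε - 1) * (Fintype.card V : ℝ)
          ≤ M ^ ((1:ℝ)+ε) * (Fintype.card V : ℝ) := by
            exact mul_le_mul_of_nonneg_right e4 (by positivity)
        _ = q * q ^ ε := by rw [e1, e2, e3]
    have hrn : (0:ℝ) ≤ c'' * ((Fintype.card V : ℝ)) ^ ((1:ℝ) - ε) := by positivity
    linarith
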